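/- Let Γ = ∞(l, k, 1) be the signed ∞-graph obtained from two vertex-disjoint signed cycles C_l and C_k by identifying one vertex of each (so they share exactly one common vertex), where both C_l and C_k have nullity 2. Then η(Γ) = 3. -/

import Mathlib

open scoped Classical

/-- The nullity of a real matrix: the dimension of the kernel of the
associated linear map. -/
noncomputable def Matrix.nullity {n : Type*} [Fintype n] (A : Matrix n n ℝ) : ℕ :=
  Module.finrank ℝ (LinearMap.ker A.mulVecLin)

private def chainF (a : ℕ → ℝ) (t s : ℝ) : ℕ → ℝ
  | 0 => s
  | 1 => -(a 0 * a 1) * t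
  | n+2 => -(a (n+1) * a (n+2)) * chainF a t s n

private lemma chainF_step (a : ℕ → ℝ) (t s : ℝ) (n : ℕ) :
    chainF a t s (n+2) = -(a (n+1) * a (n+2)) * chainF a t s n := by
  simp [chainF]

private lemma chainF_even (a : ℕ → ℝ) (t s : ℝ) : ∀ j,
    chainF a t s (2*j) = (-1)^j * (∏ i ∈ Finset.Ico 1 (2*j+1), a i) * s
  | 0 => by simp [chainF]
  | (j+1) => by
      have h1 : 2*(j+1) = (2*j)+2 := by ring
      rw [h1, chainF_step, chainF_even a t s j]
      have h2 : (∏ i ∈ Finset.Ico 1 (2*j+2+1), a i)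
          = (∏ i ∈ Finset.Ico 1 (2*j+1), a i) * a (2*j+1) * a (2*j+2) := by
        rw [show 2*j+2+1 = (2*j+1)+1+1 by ring,
          Finset.prod_Ico_succ_top (by omega), Finset.prod_Ico_succ_top (by omega)]
      rw [show 2*j+2 = 2*(j+1) by ring] at h2 ⊢
      rw [h2, pow_succ]
      ring

private lemma chainF_odd (a : ℕ → ℝ) (t s : ℝ) : ∀ j,
    chainF a t s (2*j+1) = (-1)^(j+1) * (∏ i ∈ Finset.range (2*j+2), a i) * t
  | 0 => by simp [chainF, Finset.prod_range_succ]
  | (j+1) => by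
      have h1 : 2*(j+1)+1 = (2*j+1)+2 := by ring
      rw [h1, chainF_step, chainF_odd a t s j]
      have h2 : (∏ i ∈ Finset.range (2*(j+1)+2), a i)
          = (∏ i ∈ Finset.range (2*j+2), a i) * a (2*j+2) * a (2*j+3) := by
        rw [show 2*(j+1)+2 = (2*j+2)+1+1 by ring,
          Finset.prod_range_succ, Finset.prod_range_succ]
      rw [h2, pow_succ, pow_succ]
      ring_nf

private lemma sum_single' {ι : Type*} [Fintype ι] [DecidableEq ι] (f : ι → ℝ) (k : ι)
    (hf : ∀ j, j ≠ k → f j = 0) : ∑ j, f j = f k :=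
  Finset.sum_eq_single_of_mem k (Finset.mem_univ k) (fun j _ hj => hf j hj)

private lemma sum_pair' {ι : Type*} [Fintype ι] [DecidableEq ι] (f : ι → ℝ) (k l : ι)
    (hkl : k ≠ l) (hf : ∀ j, j ≠ k → j ≠ l → f j = 0) : ∑ j, f j = f k + f l := by
  rw [← Finset.sum_subset (Finset.subset_univ {k, l})]
  · rw [Finset.sum_pair hkl]
  · intro j _ hj
    simp only [Finset.mem_insert, Finset.mem_singleton, not_or] at hj
    exact hf j hj.1 hj.2

private lemma prod_range_eq_head_mul (f : ℕ → ℝ) (n : ℕ) :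
    ∏ i ∈ Finset.range (n+1), f i = f 0 * ∏ i ∈ Finset.Ico 1 (n+1), f i := by
  rw [Finset.range_eq_Ico, Finset.prod_eq_prod_Ico_succ_bot (by omega)]

private lemma chainF_lin (a : ℕ → ℝ) (t s : ℝ) : ∀ n,
    chainF a t s n = t * chainF a 1 0 n + s * chainF a 0 1 n
  | 0 => by simp [chainF]
  | 1 => by simp [chainF]; ring
  | (n+2) => by
      rw [chainF_step, chainF_step, chainF_step, chainF_lin a t s n]; ring

private lemma chainF_zero (a : ℕ → ℝ) (n : ℕ) : chainF a 0 0 n = 0 := by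
  rw [chainF_lin]; ring

/-- Let `Γ = ∞(l, k, 1)` be the signed ∞-graph obtained from
two vertex-disjoint signed cycles `C_l` and `C_k` (here `l = p + 1 ≥ 3` and
`k = q + 1 ≥ 3`) by identifying one vertex of each, both cycles having
nullity `2` (positive of length `≡ 0 (mod 4)` or negative of length
`≡ 2 (mod 4)`).  The vertices are the common vertex (`Sum.inl ()`), the other
`p` vertices `c₀, …, c_{p-1}` of the first cycle and the other `q` vertices
`d₀, …, d_{q-1}` of the second cycle; `α 0` is the sign of the edge from the
centre to `c₀`, `α t` the sign of `c_{t-1}c_t`, and `α p` the sign of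
`c_{p-1}`–centre, and similarly `β` for the second cycle.  Then `η(Γ) = 3`. -/
theorem nullity_infinity_graph (p q : ℕ) (hp : 2 ≤ p) (hq : 2 ≤ q)
    (α : Fin (p + 1) → ℝ) (β : Fin (q + 1) → ℝ)
    (hα : ∀ i, α i = 1 ∨ α i = -1) (hβ : ∀ i, β i = 1 ∨ β i = -1)
    (hα2 : ((∏ i, α i) = 1 ∧ (p + 1) % 4 = 0) ∨
           ((∏ i, α i) = -1 ∧ (p + 1) % 4 = 2))
    (hβ2 : ((∏ i, β i) = 1 ∧ (q + 1) % 4 = 0) ∨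
           ((∏ i, β i) = -1 ∧ (q + 1) % 4 = 2))
    (A : Matrix (Unit ⊕ Fin p ⊕ Fin q) (Unit ⊕ Fin p ⊕ Fin q) ℝ)
    (hsymA : A.IsSymm)
    (hA1 : A (Sum.inl ()) (Sum.inl ()) = 0)
    (hA2 : ∀ i : Fin p,
      A (Sum.inl ()) (Sum.inr (Sum.inl i)) =
        if (i : ℕ) = 0 then α 0
        else if (i : ℕ) + 1 = p then α (Fin.last p) else 0)
    (hA3 : ∀ j : Fin q,
      A (Sum.inl ()) (Sum.inr (Sum.inr j)) =
        if (j : ℕ) = 0 then β 0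
        else if (j : ℕ) + 1 = q then β (Fin.last q) else 0)
    (hA4 : ∀ i j : Fin p,
      A (Sum.inr (Sum.inl i)) (Sum.inr (Sum.inl j)) =
        if (i : ℕ) + 1 = (j : ℕ) then α j.castSucc
        else if (j : ℕ) + 1 = (i : ℕ) then α i.castSucc else 0)
    (hA5 : ∀ i j : Fin q,
      A (Sum.inr (Sum.inr i)) (Sum.inr (Sum.inr j)) =
        if (i : ℕ) + 1 = (j : ℕ) then β j.castSucc
        else if (j : ℕ) + 1 = (i : ℕ) then β i.castSucc else 0)
    (hA6 : ∀ (i : Fin p) (j : Fin q),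
      A (Sum.inr (Sum.inl i)) (Sum.inr (Sum.inr j)) = 0) :
    A.nullity = 3 := by
  classical
  obtain ⟨m, rfl⟩ : ∃ m, p = 2*m+3 := by
    rcases hα2 with ⟨-, h⟩ | ⟨-, h⟩ <;> exact ⟨(p-3)/2, by omega⟩
  obtain ⟨k, rfl⟩ : ∃ k, q = 2*k+3 := by
    rcases hβ2 with ⟨-, h⟩ | ⟨-, h⟩ <;> exact ⟨(q-3)/2, by omega⟩
  set a : ℕ → ℝ := fun n => α ⟨min n (2*m+3), by omega⟩ with ha_def
  set b : ℕ → ℝ := fun n => β ⟨min n (2*k+3), by omega⟩ with hb_def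
  have haval : ∀ n, ∀ h : n ≤ 2*m+3, a n = α ⟨n, by omega⟩ := by
    intro n h
    simp only [ha_def]
    congr 1
    exact Fin.ext (by simp <;> omega)
  have hbval : ∀ n, ∀ h : n ≤ 2*k+3, b n = β ⟨n, by omega⟩ := by
    intro n h
    simp only [hb_def]
    congr 1
    exact Fin.ext (by simp <;> omega)
  have hasq : ∀ n, a n * a n = 1 := by
    intro n; rcases hα ⟨min n (2*m+3), by omega⟩ with h | h <;>
      simp only [ha_def] <;> rw [h] <;> norm_num
  have hbsq : ∀ n, b n * b n = 1 := by
    intro n; rcases hβ ⟨min n (2*k+3), by omega⟩ with h | h <;>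
      simp only [hb_def] <;> rw [h] <;> norm_num
  have hProdA : ∏ i ∈ Finset.range (2*m+4), a i = ∏ i, α i := by
    rw [← Fin.prod_univ_eq_prod_range a (2*m+4)]
    exact Finset.prod_congr rfl (fun i _ => by
      rw [haval i (by omega)])
  have hProdB : ∏ i ∈ Finset.range (2*k+4), b i = ∏ i, β i := by
    rw [← Fin.prod_univ_eq_prod_range b (2*k+4)]
    exact Finset.prod_congr rfl (fun i _ => by
      rw [hbval i (by omega)])
  have hkeyA : (1:ℝ) + (-1)^(m+1) * ∏ i ∈ Finset.range (2*m+4), a i = 0 := by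
    rw [hProdA]
    rcases hα2 with ⟨h1, h2⟩ | ⟨h1, h2⟩
    · rw [h1, Odd.neg_one_pow ⟨m/2, by omega⟩]; ring
    · rw [h1, Even.neg_one_pow ⟨(m+1)/2, by omega⟩]; ring
  have hkeyB : (1:ℝ) + (-1)^(k+1) * ∏ i ∈ Finset.range (2*k+4), b i = 0 := by
    rw [hProdB]
    rcases hβ2 with ⟨h1, h2⟩ | ⟨h1, h2⟩
    · rw [h1, Odd.neg_one_pow ⟨k/2, by omega⟩]; ring
    · rw [h1, Even.neg_one_pow ⟨(k+1)/2, by omega⟩]; ring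
  have hαa : ∀ j : Fin (2*m+3), α j.castSucc = a (j:ℕ) := by
    intro j; rw [haval j (by omega)]; exact congrArg α (Fin.ext rfl)
  have hβb : ∀ j : Fin (2*k+3), β j.castSucc = b (j:ℕ) := by
    intro j; rw [hbval j (by omega)]; exact congrArg β (Fin.ext rfl)
  have hα0 : α 0 = a 0 := by rw [haval 0 (by omega)]; exact congrArg α (Fin.ext rfl)
  have hβ0 : β 0 = b 0 := by rw [hbval 0 (by omega)]; exact congrArg β (Fin.ext rfl)
  have hαlast : α (Fin.last (2*m+3)) = a (2*m+3) := by
    rw [haval _ le_rfl]; exact congrArg α (Fin.ext rfl)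
  have hβlast : β (Fin.last (2*k+3)) = b (2*k+3) := by
    rw [hbval _ le_rfl]; exact congrArg β (Fin.ext rfl)
  have hsym : ∀ r s, A r s = A s r := fun r s => hsymA.apply s r
  -- row expansion
  have expand : ∀ (x : Unit ⊕ Fin (2*m+3) ⊕ Fin (2*k+3) → ℝ) (r),
      A.mulVec x r = A r (Sum.inl ()) * x (Sum.inl ())
        + ((∑ i, A r (Sum.inr (Sum.inl i)) * x (Sum.inr (Sum.inl i)))
        + ∑ j, A r (Sum.inr (Sum.inr j)) * x (Sum.inr (Sum.inr j))) := by
    intro x r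
    simp only [Matrix.mulVec, dotProduct, Fintype.sum_sum_type,
      Finset.univ_unique, Finset.sum_singleton]
  -- entry values
  have EA0 : A (Sum.inl ()) (Sum.inr (Sum.inl (⟨0, by omega⟩ : Fin (2*m+3)))) = a 0 := by
    rw [hA2]
    rw [show ((⟨0, by omega⟩ : Fin (2*m+3)) : ℕ) = 0 from rfl, if_pos rfl]
    exact hα0
  have EAl : A (Sum.inl ()) (Sum.inr (Sum.inl (⟨2*m+2, by omega⟩ : Fin (2*m+3)))) = a (2*m+3) := by
    rw [hA2]
    rw [show ((⟨2*m+2, by omega⟩ : Fin (2*m+3)) : ℕ) = 2*m+2 from rfl,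
      if_neg (by omega), if_pos rfl]
    exact hαlast
  have EAmid : ∀ n, ∀ h : n+3 ≤ 2*m+3,
      A (Sum.inl ()) (Sum.inr (Sum.inl (⟨n+1, by omega⟩ : Fin (2*m+3)))) = 0 := by
    intro n h
    rw [hA2]
    rw [show ((⟨n+1, by omega⟩ : Fin (2*m+3)) : ℕ) = n+1 from rfl,
      if_neg (by omega), if_neg (by omega)]
  have EAup : ∀ n, ∀ h : n+1 < 2*m+3,
      A (Sum.inr (Sum.inl (⟨n, by omega⟩ : Fin (2*m+3)))) (Sum.inr (Sum.inl ⟨n+1, h⟩)) =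
        a (n+1) := by
    intro n h
    rw [hA4]
    rw [show ((⟨n, by omega⟩ : Fin (2*m+3)) : ℕ) = n from rfl,
      show ((⟨n+1, h⟩ : Fin (2*m+3)) : ℕ) = n+1 from rfl, if_pos rfl, hαa]
  have EAdown : ∀ n, ∀ h : n+1 < 2*m+3,
      A (Sum.inr (Sum.inl (⟨n+1, h⟩ : Fin (2*m+3)))) (Sum.inr (Sum.inl ⟨n, by omega⟩)) =
        a (n+1) := by
    intro n h
    rw [hA4]
    rw [show ((⟨n, by omega⟩ : Fin (2*m+3)) : ℕ) = n from rfl,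
      show ((⟨n+1, h⟩ : Fin (2*m+3)) : ℕ) = n+1 from rfl,
      if_neg (by omega), if_pos rfl, hαa]
  have EB0 : A (Sum.inl ()) (Sum.inr (Sum.inr (⟨0, by omega⟩ : Fin (2*k+3)))) = b 0 := by
    rw [hA3]
    rw [show ((⟨0, by omega⟩ : Fin (2*k+3)) : ℕ) = 0 from rfl, if_pos rfl]
    exact hβ0
  have EBl : A (Sum.inl ()) (Sum.inr (Sum.inr (⟨2*k+2, by omega⟩ : Fin (2*k+3)))) = b (2*k+3) := by
    rw [hA3]
    rw [show ((⟨2*k+2, by omega⟩ : Fin (2*k+3)) : ℕ) = 2*k+2 from rfl,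
      if_neg (by omega), if_pos rfl]
    exact hβlast
  have EBmid : ∀ n, ∀ h : n+3 ≤ 2*k+3,
      A (Sum.inl ()) (Sum.inr (Sum.inr (⟨n+1, by omega⟩ : Fin (2*k+3)))) = 0 := by
    intro n h
    rw [hA3]
    rw [show ((⟨n+1, by omega⟩ : Fin (2*k+3)) : ℕ) = n+1 from rfl,
      if_neg (by omega), if_neg (by omega)]
  have EBup : ∀ n, ∀ h : n+1 < 2*k+3,
      A (Sum.inr (Sum.inr (⟨n, by omega⟩ : Fin (2*k+3)))) (Sum.inr (Sum.inr ⟨n+1, h⟩)) =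
        b (n+1) := by
    intro n h
    rw [hA5]
    rw [show ((⟨n, by omega⟩ : Fin (2*k+3)) : ℕ) = n from rfl,
      show ((⟨n+1, h⟩ : Fin (2*k+3)) : ℕ) = n+1 from rfl, if_pos rfl, hβb]
  have EBdown : ∀ n, ∀ h : n+1 < 2*k+3,
      A (Sum.inr (Sum.inr (⟨n+1, h⟩ : Fin (2*k+3)))) (Sum.inr (Sum.inr ⟨n, by omega⟩)) =
        b (n+1) := by
    intro n h
    rw [hA5]
    rw [show ((⟨n, by omega⟩ : Fin (2*k+3)) : ℕ) = n from rfl,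
      show ((⟨n+1, h⟩ : Fin (2*k+3)) : ℕ) = n+1 from rfl,
      if_neg (by omega), if_pos rfl, hβb]
  -- row at the centre
  have rowv : ∀ x, A.mulVec x (Sum.inl ()) =
      a 0 * x (Sum.inr (Sum.inl ⟨0, by omega⟩))
        + a (2*m+3) * x (Sum.inr (Sum.inl ⟨2*m+2, by omega⟩))
      + (b 0 * x (Sum.inr (Sum.inr ⟨0, by omega⟩))
        + b (2*k+3) * x (Sum.inr (Sum.inr ⟨2*k+2, by omega⟩))) := by
    intro x
    rw [expand, hA1,
      sum_pair' _ (⟨0, by omega⟩ : Fin (2*m+3)) ⟨2*m+2, by omega⟩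
        (by simp [Fin.ext_iff]) (fun j hj0 hjl => by
          rw [hA2, if_neg (by exact fun h => hj0 (Fin.ext h)),
            if_neg (by simp [Fin.ext_iff] at hjl; omega)]; ring),
      sum_pair' _ (⟨0, by omega⟩ : Fin (2*k+3)) ⟨2*k+2, by omega⟩
        (by simp [Fin.ext_iff]) (fun j hj0 hjl => by
          rw [hA3, if_neg (by exact fun h => hj0 (Fin.ext h)),
            if_neg (by simp [Fin.ext_iff] at hjl; omega)]; ring),
      EA0, EAl, EB0, EBl]
    ring
  -- first row of the a-cycle
  have rowc0 : ∀ x, A.mulVec x (Sum.inr (Sum.inl (⟨0, by omega⟩ : Fin (2*m+3)))) =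
      a 0 * x (Sum.inl ()) + a 1 * x (Sum.inr (Sum.inl ⟨1, by omega⟩)) := by
    intro x
    rw [expand, hsym _ (Sum.inl ()), EA0,
      sum_single' _ (⟨1, by omega⟩ : Fin (2*m+3)) (fun j hj => by
        rw [hA4, if_neg (by simp [Fin.ext_iff] at hj ⊢; omega), if_neg (by simp)]; ring),
      Finset.sum_eq_zero (fun j _ => by rw [hA6]; ring),
      show (Sum.inr (Sum.inl (⟨1, by omega⟩ : Fin (2*m+3))) :
        Unit ⊕ Fin (2*m+3) ⊕ Fin (2*k+3)) = Sum.inr (Sum.inl ⟨0+1, by omega⟩) from rfl,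
      EAup 0 (by omega)]
    ring
  -- interior rows of the a-cycle
  have rowci : ∀ x n, ∀ h : n+3 ≤ 2*m+3,
      A.mulVec x (Sum.inr (Sum.inl (⟨n+1, by omega⟩ : Fin (2*m+3)))) =
      a (n+1) * x (Sum.inr (Sum.inl ⟨n, by omega⟩))
        + a (n+2) * x (Sum.inr (Sum.inl ⟨n+2, by omega⟩)) := by
    intro x n h
    rw [expand, hsym _ (Sum.inl ()), EAmid n h,
      sum_pair' _ (⟨n, by omega⟩ : Fin (2*m+3)) ⟨n+2, by omega⟩
        (by simp [Fin.ext_iff]) (fun j hj0 hjl => by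
          simp only [Ne, Fin.ext_iff] at hj0 hjl
          rw [hA4, if_neg (by simp at hj0 hjl ⊢; omega),
            if_neg (by simp at hj0 hjl ⊢; omega)]; ring),
      Finset.sum_eq_zero (fun j _ => by rw [hA6]; ring),
      EAdown n (by omega),
      show (Sum.inr (Sum.inl (⟨n+2, by omega⟩ : Fin (2*m+3))) :
        Unit ⊕ Fin (2*m+3) ⊕ Fin (2*k+3)) = Sum.inr (Sum.inl ⟨(n+1)+1, by omega⟩) from rfl,
      EAup (n+1) (by omega)]
    ring
  -- last row of the a-cycle
  have rowcl : ∀ x, A.mulVec x (Sum.inr (Sum.inl (⟨2*m+2, by omega⟩ : Fin (2*m+3)))) =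
      a (2*m+3) * x (Sum.inl ())
        + a (2*m+2) * x (Sum.inr (Sum.inl ⟨2*m+1, by omega⟩)) := by
    intro x
    rw [expand, hsym _ (Sum.inl ()), EAl,
      sum_single' _ (⟨2*m+1, by omega⟩ : Fin (2*m+3)) (fun j hj => by
        simp only [Ne, Fin.ext_iff] at hj
        rw [hA4, if_neg (by simp at hj ⊢; omega), if_neg (by simp at hj ⊢; omega)]; ring),
      Finset.sum_eq_zero (fun j _ => by rw [hA6]; ring),
      show (Sum.inr (Sum.inl (⟨2*m+2, by omega⟩ : Fin (2*m+3))) :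
        Unit ⊕ Fin (2*m+3) ⊕ Fin (2*k+3)) = Sum.inr (Sum.inl ⟨(2*m+1)+1, by omega⟩) from rfl,
      EAdown (2*m+1) (by omega)]
    ring
  -- rows of the b-cycle
  have rowd0 : ∀ x, A.mulVec x (Sum.inr (Sum.inr (⟨0, by omega⟩ : Fin (2*k+3)))) =
      b 0 * x (Sum.inl ()) + b 1 * x (Sum.inr (Sum.inr ⟨1, by omega⟩)) := by
    intro x
    rw [expand, hsym _ (Sum.inl ()), EB0,
      Finset.sum_eq_zero (fun j _ => by rw [hsym, hA6]; ring),
      sum_single' _ (⟨1, by omega⟩ : Fin (2*k+3)) (fun j hj => by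
        rw [hA5, if_neg (by simp [Fin.ext_iff] at hj ⊢; omega), if_neg (by simp)]; ring),
      show (Sum.inr (Sum.inr (⟨1, by omega⟩ : Fin (2*k+3))) :
        Unit ⊕ Fin (2*m+3) ⊕ Fin (2*k+3)) = Sum.inr (Sum.inr ⟨0+1, by omega⟩) from rfl,
      EBup 0 (by omega)]
    ring
  have rowdi : ∀ x n, ∀ h : n+3 ≤ 2*k+3,
      A.mulVec x (Sum.inr (Sum.inr (⟨n+1, by omega⟩ : Fin (2*k+3)))) =
      b (n+1) * x (Sum.inr (Sum.inr ⟨n, by omega⟩))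
        + b (n+2) * x (Sum.inr (Sum.inr ⟨n+2, by omega⟩)) := by
    intro x n h
    rw [expand, hsym _ (Sum.inl ()), EBmid n h,
      Finset.sum_eq_zero (fun j _ => by rw [hsym, hA6]; ring),
      sum_pair' _ (⟨n, by omega⟩ : Fin (2*k+3)) ⟨n+2, by omega⟩
        (by simp [Fin.ext_iff]) (fun j hj0 hjl => by
          simp only [Ne, Fin.ext_iff] at hj0 hjl
          rw [hA5, if_neg (by simp at hj0 hjl ⊢; omega),
            if_neg (by simp at hj0 hjl ⊢; omega)]; ring),
      EBdown n (by omega),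
      show (Sum.inr (Sum.inr (⟨n+2, by omega⟩ : Fin (2*k+3))) :
        Unit ⊕ Fin (2*m+3) ⊕ Fin (2*k+3)) = Sum.inr (Sum.inr ⟨(n+1)+1, by omega⟩) from rfl,
      EBup (n+1) (by omega)]
    ring
  have rowdl : ∀ x, A.mulVec x (Sum.inr (Sum.inr (⟨2*k+2, by omega⟩ : Fin (2*k+3)))) =
      b (2*k+3) * x (Sum.inl ())
        + b (2*k+2) * x (Sum.inr (Sum.inr ⟨2*k+1, by omega⟩)) := by
    intro x
    rw [expand, hsym _ (Sum.inl ()), EBl,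
      Finset.sum_eq_zero (fun j _ => by rw [hsym, hA6]; ring),
      sum_single' _ (⟨2*k+1, by omega⟩ : Fin (2*k+3)) (fun j hj => by
        simp only [Ne, Fin.ext_iff] at hj
        rw [hA5, if_neg (by simp at hj ⊢; omega), if_neg (by simp at hj ⊢; omega)]; ring),
      show (Sum.inr (Sum.inr (⟨2*k+2, by omega⟩ : Fin (2*k+3))) :
        Unit ⊕ Fin (2*m+3) ⊕ Fin (2*k+3)) = Sum.inr (Sum.inr ⟨(2*k+1)+1, by omega⟩) from rfl,
      EBdown (2*k+1) (by omega)]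
    ring
  set w : ℝ → ℝ → ℝ → (Unit ⊕ Fin (2*m+3) ⊕ Fin (2*k+3) → ℝ) :=
    fun t s u => Sum.elim (fun _ => t)
      (Sum.elim (fun i => chainF a t s (i:ℕ)) (fun j => chainF b t u (j:ℕ))) with hwdef
  -- the three kernel generators are in the kernel
  have hmem : ∀ t s u : ℝ, A.mulVec (w t s u) = 0 := by
    intro t s u
    -- key identities in convenient forms
    have e1 : ∏ i ∈ Finset.range (2*m+4), a i
        = a 0 * ((∏ i ∈ Finset.Ico 1 (2*m+3), a i) * a (2*m+3)) := by
      rw [show 2*m+4 = (2*m+3)+1 from by omega, prod_range_eq_head_mul a (2*m+3),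
        Finset.prod_Ico_succ_top (by omega)]
    have e1' : ∏ i ∈ Finset.range (2*k+4), b i
        = b 0 * ((∏ i ∈ Finset.Ico 1 (2*k+3), b i) * b (2*k+3)) := by
      rw [show 2*k+4 = (2*k+3)+1 from by omega, prod_range_eq_head_mul b (2*k+3),
        Finset.prod_Ico_succ_top (by omega)]
    have keyA1 : (1:ℝ) + (-1)^(m+1)
        * (a 0 * ((∏ i ∈ Finset.Ico 1 (2*m+3), a i) * a (2*m+3))) = 0 := by
      rw [← e1]; exact hkeyA
    have keyB1 : (1:ℝ) + (-1)^(k+1)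
        * (b 0 * ((∏ i ∈ Finset.Ico 1 (2*k+3), b i) * b (2*k+3))) = 0 := by
      rw [← e1']; exact hkeyB
    have e2 : ∏ i ∈ Finset.range (2*m+4), a i
        = (∏ i ∈ Finset.range (2*m+2), a i) * a (2*m+2) * a (2*m+3) := by
      rw [show 2*m+4 = (2*m+2)+1+1 from by omega, Finset.prod_range_succ,
        Finset.prod_range_succ]
    have e2' : ∏ i ∈ Finset.range (2*k+4), b i
        = (∏ i ∈ Finset.range (2*k+2), b i) * b (2*k+2) * b (2*k+3) := by
      rw [show 2*k+4 = (2*k+2)+1+1 from by omega, Finset.prod_range_succ,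
        Finset.prod_range_succ]
    have keyA2 : (1:ℝ) + (-1)^(m+1)
        * ((∏ i ∈ Finset.range (2*m+2), a i) * a (2*m+2) * a (2*m+3)) = 0 := by
      rw [← e2]; exact hkeyA
    have keyB2 : (1:ℝ) + (-1)^(k+1)
        * ((∏ i ∈ Finset.range (2*k+2), b i) * b (2*k+2) * b (2*k+3)) = 0 := by
      rw [← e2']; exact hkeyB
    funext r
    rw [Pi.zero_apply]
    rcases r with u' | i | j
    · cases u'
      rw [rowv]
      rw [show w t s u (Sum.inr (Sum.inl ⟨0, by omega⟩)) = chainF a t s 0 from rfl,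
        show w t s u (Sum.inr (Sum.inl ⟨2*m+2, by omega⟩)) = chainF a t s (2*m+2) from rfl,
        show w t s u (Sum.inr (Sum.inr ⟨0, by omega⟩)) = chainF b t u 0 from rfl,
        show w t s u (Sum.inr (Sum.inr ⟨2*k+2, by omega⟩)) = chainF b t u (2*k+2) from rfl,
        show chainF a t s 0 = s from rfl, show chainF b t u 0 = u from rfl,
        show 2*m+2 = 2*(m+1) from by ring, chainF_even a t s (m+1),
        show 2*k+2 = 2*(k+1) from by ring, chainF_even b t u (k+1),
        show 2*(m+1)+1 = 2*m+3 from by ring, show 2*(k+1)+1 = 2*k+3 from by ring]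
      linear_combination (a 0 * s) * keyA1 + (b 0 * u) * keyB1
        - ((-1)^(m+1) * (∏ i ∈ Finset.Ico 1 (2*m+3), a i) * a (2*m+3) * s) * hasq 0
        - ((-1)^(k+1) * (∏ i ∈ Finset.Ico 1 (2*k+3), b i) * b (2*k+3) * u) * hbsq 0
    · obtain ⟨iv, hiv⟩ := i
      by_cases h0 : iv = 0
      · subst h0
        rw [rowc0]
        rw [show w t s u (Sum.inl ()) = t from rfl,
          show w t s u (Sum.inr (Sum.inl ⟨1, by omega⟩)) = chainF a t s 1 from rfl,
          show chainF a t s 1 = -(a 0 * a 1) * t from by simp [chainF]]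
        linear_combination (-(a 0 * t)) * hasq 1
      by_cases hl : iv = 2*m+2
      · subst hl
        rw [rowcl]
        rw [show w t s u (Sum.inl ()) = t from rfl,
          show w t s u (Sum.inr (Sum.inl ⟨2*m+1, by omega⟩)) = chainF a t s (2*m+1) from rfl,
          chainF_odd a t s m]
        linear_combination (a (2*m+3) * t) * keyA2
          - ((-1)^(m+1) * (∏ i ∈ Finset.range (2*m+2), a i) * a (2*m+2) * t) * hasq (2*m+3)
      · obtain ⟨n, rfl⟩ : ∃ n, iv = n+1 := ⟨iv-1, by omega⟩
        have hn : n+3 ≤ 2*m+3 := by omega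
        rw [rowci _ n hn]
        rw [show w t s u (Sum.inr (Sum.inl ⟨n, by omega⟩)) = chainF a t s n from rfl,
          show w t s u (Sum.inr (Sum.inl ⟨n+2, by omega⟩)) = chainF a t s (n+2) from rfl,
          chainF_step]
        linear_combination (-(a (n+1) * chainF a t s n)) * hasq (n+2)
    · obtain ⟨iv, hiv⟩ := j
      by_cases h0 : iv = 0
      · subst h0
        rw [rowd0]
        rw [show w t s u (Sum.inl ()) = t from rfl,
          show w t s u (Sum.inr (Sum.inr ⟨1, by omega⟩)) = chainF b t u 1 from rfl,
          show chainF b t u 1 = -(b 0 * b 1) * t from by simp [chainF]]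
        linear_combination (-(b 0 * t)) * hbsq 1
      by_cases hl : iv = 2*k+2
      · subst hl
        rw [rowdl]
        rw [show w t s u (Sum.inl ()) = t from rfl,
          show w t s u (Sum.inr (Sum.inr ⟨2*k+1, by omega⟩)) = chainF b t u (2*k+1) from rfl,
          chainF_odd b t u k]
        linear_combination (b (2*k+3) * t) * keyB2
          - ((-1)^(k+1) * (∏ i ∈ Finset.range (2*k+2), b i) * b (2*k+2) * t) * hbsq (2*k+3)
      · obtain ⟨n, rfl⟩ : ∃ n, iv = n+1 := ⟨iv-1, by omega⟩
        have hn : n+3 ≤ 2*k+3 := by omega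
        rw [rowdi _ n hn]
        rw [show w t s u (Sum.inr (Sum.inr ⟨n, by omega⟩)) = chainF b t u n from rfl,
          show w t s u (Sum.inr (Sum.inr ⟨n+2, by omega⟩)) = chainF b t u (n+2) from rfl,
          chainF_step]
        linear_combination (-(b (n+1) * chainF b t u n)) * hbsq (n+2)
  -- every kernel vector is determined by its values at the three special vertices
  have huc : ∀ x : Unit ⊕ Fin (2*m+3) ⊕ Fin (2*k+3) → ℝ, A.mulVec x = 0 →
      ∀ n, ∀ hn : n < 2*m+3, x (Sum.inr (Sum.inl ⟨n, hn⟩))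
        = chainF a (x (Sum.inl ())) (x (Sum.inr (Sum.inl ⟨0, by omega⟩))) n := by
    intro x hx n
    induction n using Nat.strong_induction_on with
    | _ n IH =>
      match n with
      | 0 => intro hn; rfl
      | 1 =>
        intro hn
        have e := congrFun hx (Sum.inr (Sum.inl ⟨0, by omega⟩))
        rw [rowc0 x, Pi.zero_apply] at e
        rw [show chainF a (x (Sum.inl ())) (x (Sum.inr (Sum.inl ⟨0, by omega⟩))) 1
          = -(a 0 * a 1) * x (Sum.inl ()) from by simp [chainF]]
        rw [show (⟨1, hn⟩ : Fin (2*m+3)) = ⟨1, by omega⟩ from rfl]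
        linear_combination a 1 * e - x (Sum.inr (Sum.inl ⟨1, by omega⟩)) * hasq 1
      | (n+2) =>
        intro hn
        have hn3 : n+3 ≤ 2*m+3 := by omega
        have e := congrFun hx (Sum.inr (Sum.inl ⟨n+1, by omega⟩))
        rw [rowci x n hn3, Pi.zero_apply] at e
        have ihn := IH n (by omega) (by omega)
        rw [show (⟨n, by omega⟩ : Fin (2*m+3)) = ⟨n, by omega⟩ from rfl, ihn] at e
        rw [chainF_step]
        rw [show (⟨n+2, hn⟩ : Fin (2*m+3)) = ⟨n+2, by omega⟩ from rfl]
        linear_combination a (n+2) * e - x (Sum.inr (Sum.inl ⟨n+2, by omega⟩)) * hasq (n+2)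
  have hud : ∀ x : Unit ⊕ Fin (2*m+3) ⊕ Fin (2*k+3) → ℝ, A.mulVec x = 0 →
      ∀ n, ∀ hn : n < 2*k+3, x (Sum.inr (Sum.inr ⟨n, hn⟩))
        = chainF b (x (Sum.inl ())) (x (Sum.inr (Sum.inr ⟨0, by omega⟩))) n := by
    intro x hx n
    induction n using Nat.strong_induction_on with
    | _ n IH =>
      match n with
      | 0 => intro hn; rfl
      | 1 =>
        intro hn
        have e := congrFun hx (Sum.inr (Sum.inr ⟨0, by omega⟩))
        rw [rowd0 x, Pi.zero_apply] at e
        rw [show chainF b (x (Sum.inl ())) (x (Sum.inr (Sum.inr ⟨0, by omega⟩))) 1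
          = -(b 0 * b 1) * x (Sum.inl ()) from by simp [chainF]]
        rw [show (⟨1, hn⟩ : Fin (2*k+3)) = ⟨1, by omega⟩ from rfl]
        linear_combination b 1 * e - x (Sum.inr (Sum.inr ⟨1, by omega⟩)) * hbsq 1
      | (n+2) =>
        intro hn
        have hn3 : n+3 ≤ 2*k+3 := by omega
        have e := congrFun hx (Sum.inr (Sum.inr ⟨n+1, by omega⟩))
        rw [rowdi x n hn3, Pi.zero_apply] at e
        have ihn := IH n (by omega) (by omega)
        rw [ihn] at e
        rw [chainF_step]
        rw [show (⟨n+2, hn⟩ : Fin (2*k+3)) = ⟨n+2, by omega⟩ from rfl]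
        linear_combination b (n+2) * e - x (Sum.inr (Sum.inr ⟨n+2, by omega⟩)) * hbsq (n+2)
  -- kernel is the span of the three generators
  have hker : LinearMap.ker A.mulVecLin =
      Submodule.span ℝ (Set.range ![w 1 0 0, w 0 1 0, w 0 0 1]) := by
    apply le_antisymm
    · intro x hx
      rw [LinearMap.mem_ker, Matrix.mulVecLin_apply] at hx
      have hx3 : x = x (Sum.inl ()) • w 1 0 0
          + x (Sum.inr (Sum.inl ⟨0, by omega⟩)) • w 0 1 0
          + x (Sum.inr (Sum.inr ⟨0, by omega⟩)) • w 0 0 1 := by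
        funext r
        simp only [Pi.add_apply, Pi.smul_apply, smul_eq_mul]
        rcases r with u' | i | j
        · cases u'
          rw [show w 1 0 0 (Sum.inl ()) = 1 from rfl, show w 0 1 0 (Sum.inl ()) = 0 from rfl,
            show w 0 0 1 (Sum.inl ()) = 0 from rfl]
          ring
        · obtain ⟨n, hn⟩ := i
          rw [huc x hx n hn,
            show w 1 0 0 (Sum.inr (Sum.inl ⟨n, hn⟩)) = chainF a 1 0 n from rfl,
            show w 0 1 0 (Sum.inr (Sum.inl ⟨n, hn⟩)) = chainF a 0 1 n from rfl,
            show w 0 0 1 (Sum.inr (Sum.inl ⟨n, hn⟩)) = chainF a 0 0 n from rfl,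
            chainF_lin a (x (Sum.inl ())) (x (Sum.inr (Sum.inl ⟨0, by omega⟩))) n,
            chainF_zero]
          ring
        · obtain ⟨n, hn⟩ := j
          rw [hud x hx n hn,
            show w 1 0 0 (Sum.inr (Sum.inr ⟨n, hn⟩)) = chainF b 1 0 n from rfl,
            show w 0 1 0 (Sum.inr (Sum.inr ⟨n, hn⟩)) = chainF b 0 0 n from rfl,
            show w 0 0 1 (Sum.inr (Sum.inr ⟨n, hn⟩)) = chainF b 0 1 n from rfl,
            chainF_lin b (x (Sum.inl ())) (x (Sum.inr (Sum.inr ⟨0, by omega⟩))) n,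
            chainF_zero]
          ring
      rw [hx3]
      refine add_mem (add_mem (Submodule.smul_mem _ _ (Submodule.subset_span ⟨0, by simp⟩))
        (Submodule.smul_mem _ _ (Submodule.subset_span ⟨1, by simp⟩)))
        (Submodule.smul_mem _ _ (Submodule.subset_span ⟨2, by simp⟩))
    · rw [Submodule.span_le]
      rintro y ⟨i, rfl⟩
      rw [SetLike.mem_coe, LinearMap.mem_ker, Matrix.mulVecLin_apply]
      fin_cases i
      · simpa using hmem 1 0 0
      · simpa using hmem 0 1 0
      · simpa using hmem 0 0 1
  -- the three generators are linearly independent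
  have hli : LinearIndependent ℝ ![w 1 0 0, w 0 1 0, w 0 0 1] := by
    rw [Fintype.linearIndependent_iff]
    intro g hg i
    have h0 := congrFun hg (Sum.inl ())
    have h1 := congrFun hg (Sum.inr (Sum.inl ⟨0, by omega⟩))
    have h2 := congrFun hg (Sum.inr (Sum.inr ⟨0, by omega⟩))
    simp only [Fin.sum_univ_three, Pi.add_apply, Pi.smul_apply, smul_eq_mul, Pi.zero_apply,
      Matrix.cons_val_zero, Matrix.cons_val_one, Matrix.head_cons, Matrix.cons_val_two,
      Matrix.tail_cons] at h0 h1 h2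
    rw [show w 1 0 0 (Sum.inl ()) = 1 from rfl, show w 0 1 0 (Sum.inl ()) = 0 from rfl,
      show w 0 0 1 (Sum.inl ()) = 0 from rfl] at h0
    rw [show w 1 0 0 (Sum.inr (Sum.inl ⟨0, by omega⟩)) = 0 from rfl,
      show w 0 1 0 (Sum.inr (Sum.inl ⟨0, by omega⟩)) = 1 from rfl,
      show w 0 0 1 (Sum.inr (Sum.inl ⟨0, by omega⟩)) = 0 from rfl] at h1
    rw [show w 1 0 0 (Sum.inr (Sum.inr ⟨0, by omega⟩)) = 0 from rfl,
      show w 0 1 0 (Sum.inr (Sum.inr ⟨0, by omega⟩)) = 0 from rfl,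
      show w 0 0 1 (Sum.inr (Sum.inr ⟨0, by omega⟩)) = 1 from rfl] at h2
    have hg0 : g 0 = 0 := by linarith
    have hg1 : g 1 = 0 := by linarith
    have hg2 : g 2 = 0 := by linarith
    fin_cases i
    · exact hg0
    · exact hg1
    · exact hg2
  show Module.finrank ℝ (LinearMap.ker A.mulVecLin) = 3
  rw [hker]
  exact (finrank_span_eq_card hli).trans (by simp)
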